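/- Let A = diag(1, ζₙᵃ, ζₙᵇ) with n ≥ 3, 0 ≤ a < b ≤ n−1, gcd(a,b)=1, generating a cyclic subgroup G of PGL₃(ℂ) of order n. Then G is conjugate in PGL₃(ℂ) to a subgroup of PGL₃(ℝ) if and only if a+b ≡ 0 (mod n), or a−2b ≡ 0 (mod n), or 2a−b ≡ 0 (mod n). -/

import Mathlib

open Matrix

noncomputable section

abbrev PGL3C := GL (Fin 3) ℂ ⧸ Subgroup.center (GL (Fin 3) ℂ)

def proj : GL (Fin 3) ℂ →* PGL3C := QuotientGroup.mk' _

def sigmaGL : GL (Fin 3) ℂ ≃* GL (Fin 3) ℂ :=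
  Units.mapEquiv (Complex.conjAe.toRingEquiv.mapMatrix.toMulEquiv)

lemma sigma_center :
    (Subgroup.center (GL (Fin 3) ℂ)).map sigmaGL.toMonoidHom
      = Subgroup.center (GL (Fin 3) ℂ) := by
  ext x
  simp only [Subgroup.mem_map, Subgroup.mem_center_iff]
  constructor
  · rintro ⟨y, hy, rfl⟩ g
    have := hy (sigmaGL.symm g)
    calc g * sigmaGL y = sigmaGL (sigmaGL.symm g * y) := by
          simp [_root_.map_mul]
      _ = sigmaGL (y * sigmaGL.symm g) := by rw [this]
      _ = sigmaGL y * g := by simp [_root_.map_mul]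
  · intro hx
    refine ⟨sigmaGL.symm x, fun g => ?_, by simp⟩
    have := hx (sigmaGL g)
    calc g * sigmaGL.symm x = sigmaGL.symm (sigmaGL g * x) := by simp [_root_.map_mul]
      _ = sigmaGL.symm (x * sigmaGL g) := by rw [this]
      _ = sigmaGL.symm x * g := by simp [_root_.map_mul]

def sigmaPGL : PGL3C ≃* PGL3C :=
  QuotientGroup.congr _ _ sigmaGL sigma_center

def PGL3R : Subgroup PGL3C :=
  ((Units.map ((algebraMap ℝ ℂ).mapMatrix.toMonoidHom :
      Matrix (Fin 3) (Fin 3) ℝ →* Matrix (Fin 3) (Fin 3) ℂ)).range).map proj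

/-! ### Auxiliary lemmas -/

open Complex

lemma center_scalar (g : GL (Fin 3) ℂ) (hg : g ∈ Subgroup.center (GL (Fin 3) ℂ)) :
    ∃ c : ℂ, c ≠ 0 ∧ (g : Matrix (Fin 3) (Fin 3) ℂ) = c • (1 : Matrix (Fin 3) (Fin 3) ℂ) := by
  rw [Subgroup.mem_center_iff] at hg
  have h : ∀ t : TransvectionStruct (Fin 3) ℂ,
      Commute t.toMatrix (g : Matrix (Fin 3) (Fin 3) ℂ) := by
    intro t
    have := hg ⟨t.toMatrix, t.inv.toMatrix, t.mul_inv, t.inv_mul⟩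
    have := congrArg (Units.val) this
    simpa [Commute, SemiconjBy] using this
  obtain ⟨c, hc⟩ := Matrix.mem_range_scalar_of_commute_transvectionStruct h
  have hgd : (g : Matrix (Fin 3) (Fin 3) ℂ) = c • (1 : Matrix (Fin 3) (Fin 3) ℂ) := by
    rw [← hc]; simp [Matrix.scalar_apply, Matrix.smul_one_eq_diagonal]
  refine ⟨c, ?_, hgd⟩
  intro h0
  have hU : IsUnit ((g : Matrix (Fin 3) (Fin 3) ℂ).det) :=
    (Matrix.isUnit_iff_isUnit_det _).mp g.isUnit
  rw [hgd, h0] at hU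
  simp at hU

def scalarGL (c : ℂˣ) : GL (Fin 3) ℂ :=
  ⟨(c : ℂ) • 1, ((c⁻¹ : ℂˣ) : ℂ) • 1, by
    simp [Matrix.smul_mul, Matrix.mul_smul, smul_smul], by
    simp [Matrix.smul_mul, Matrix.mul_smul, smul_smul]⟩

lemma scalarGL_mem_center (c : ℂˣ) : scalarGL c ∈ Subgroup.center (GL (Fin 3) ℂ) := by
  rw [Subgroup.mem_center_iff]
  intro g
  ext : 1
  show (g : Matrix (Fin 3) (Fin 3) ℂ) * ((c:ℂ) • 1) = ((c:ℂ) • 1) * g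
  simp [Matrix.smul_mul, Matrix.mul_smul]

lemma proj_scalarGL (c : ℂˣ) : proj (scalarGL c) = 1 := by
  rw [proj, QuotientGroup.mk'_apply, QuotientGroup.eq_one_iff]
  exact scalarGL_mem_center c

lemma proj_eq_proj {x y : GL (Fin 3) ℂ} (h : proj x = proj y) :
    ∃ c : ℂ, c ≠ 0 ∧ (y : Matrix (Fin 3) (Fin 3) ℂ)
      = c • (x : Matrix (Fin 3) (Fin 3) ℂ) := by
  rw [proj, QuotientGroup.mk'_eq_mk'] at h
  obtain ⟨z, hz, hxz⟩ := h
  obtain ⟨c, hc0, hc⟩ := center_scalar z hz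
  refine ⟨c, hc0, ?_⟩
  rw [← hxz, Units.val_mul, hc]
  rw [Matrix.mul_smul, mul_one]

lemma mem_PGL3R_of_real (B : GL (Fin 3) ℂ)
    (h : ∀ i j, ((B : Matrix (Fin 3) (Fin 3) ℂ) i j).im = 0) :
    proj B ∈ PGL3R := by
  set M : Matrix (Fin 3) (Fin 3) ℝ := fun i j => ((B : Matrix (Fin 3) (Fin 3) ℂ) i j).re with hM
  have hmap : M.map (algebraMap ℝ ℂ) = (B : Matrix (Fin 3) (Fin 3) ℂ) := by
    ext i j
    rw [Matrix.map_apply]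
    simp [hM, Matrix.map_apply, Complex.ext_iff, h i j]
  have hdet : IsUnit M.det := by
    have h1 : (algebraMap ℝ ℂ) M.det = (B : Matrix (Fin 3) (Fin 3) ℂ).det := by
      rw [← hmap, (algebraMap ℝ ℂ).map_det]; rfl
    have hBdet : (B : Matrix (Fin 3) (Fin 3) ℂ).det ≠ 0 :=
      ((Matrix.isUnit_iff_isUnit_det _).mp B.isUnit).ne_zero
    have : M.det ≠ 0 := by
      intro h0; rw [h0] at h1; simp at h1; exact hBdet h1.symm
    exact this.isUnit
  obtain ⟨Mu, hMu⟩ := (Matrix.isUnit_iff_isUnit_det _).mpr hdet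
  refine ⟨Units.map ((algebraMap ℝ ℂ).mapMatrix.toMonoidHom) Mu, ⟨Mu, rfl⟩, ?_⟩
  congr 1
  ext : 1
  show (Mu : Matrix (Fin 3) (Fin 3) ℝ).map (algebraMap ℝ ℂ) = _
  rw [hMu, hmap]

lemma sigmaPGL_proj (x : GL (Fin 3) ℂ) : sigmaPGL (proj x) = proj (sigmaGL x) := rfl

lemma sigmaGL_coe (x : GL (Fin 3) ℂ) : ((sigmaGL x : GL (Fin 3) ℂ) : Matrix (Fin 3) (Fin 3) ℂ)
    = (x : Matrix (Fin 3) (Fin 3) ℂ).map (starRingEnd ℂ) := by simp [sigmaGL]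

lemma sigmaPGL_fix {x : PGL3C} (hx : x ∈ PGL3R) : sigmaPGL x = x := by
  obtain ⟨y, ⟨M, rfl⟩, rfl⟩ := hx
  rw [sigmaPGL_proj]
  congr 1
  ext i j
  rw [sigmaGL_coe]
  simp

lemma construct (A : GL (Fin 3) ℂ) (P : Matrix (Fin 3) (Fin 3) ℂ) (hP : IsUnit P)
    (D : GL (Fin 3) ℂ) (hD : proj D = proj A)
    (M : Matrix (Fin 3) (Fin 3) ℂ) (hm : ∀ i j, (M i j).im = 0)
    (key : P * (D : Matrix (Fin 3) (Fin 3) ℂ) = M * P) :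
    ∃ φ : PGL3C,
      Subgroup.map (MulAut.conj φ).toMonoidHom (Subgroup.closure {proj A}) ≤ PGL3R := by
  obtain ⟨Pu, rfl⟩ := hP
  refine ⟨proj Pu, ?_⟩
  rw [MonoidHom.map_closure, Set.image_singleton, Subgroup.closure_le,
    Set.singleton_subset_iff]
  have h1 : (MulAut.conj (proj Pu)).toMonoidHom (proj A) = proj (Pu * D * Pu⁻¹) := by
    rw [← hD]
    simp [MulAut.conj_apply, _root_.map_mul]
  rw [h1]
  apply mem_PGL3R_of_real
  have hB : ((Pu * D * Pu⁻¹ : GL (Fin 3) ℂ) : Matrix (Fin 3) (Fin 3) ℂ) = M := by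
    have h2 : ((Pu : Matrix (Fin 3) (Fin 3) ℂ))
        * ((Pu⁻¹ : GL (Fin 3) ℂ) : Matrix (Fin 3) (Fin 3) ℂ) = 1 := by
      rw [← Units.val_mul, mul_inv_cancel, Units.val_one]
    calc ((Pu * D * Pu⁻¹ : GL (Fin 3) ℂ) : Matrix (Fin 3) (Fin 3) ℂ)
        = (Pu : Matrix (Fin 3) (Fin 3) ℂ) * (D : Matrix (Fin 3) (Fin 3) ℂ)
          * ((Pu⁻¹ : GL (Fin 3) ℂ) : Matrix (Fin 3) (Fin 3) ℂ) := by simp [Units.val_mul]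
      _ = M * ((Pu : Matrix (Fin 3) (Fin 3) ℂ)
          * ((Pu⁻¹ : GL (Fin 3) ℂ) : Matrix (Fin 3) (Fin 3) ℂ)) := by
            rw [key]; rw [mul_assoc]
      _ = M := by rw [h2, mul_one]
  rw [hB]; exact hm

lemma key1 (x y : ℝ) :
    (!![1,0,0; 0,1,1; 0,-I,I] : Matrix (Fin 3) (Fin 3) ℂ)
      * diagonal ![1, (x:ℂ) + y*I, (x:ℂ) - y*I]
    = !![1,0,0; 0,(x:ℂ),-(y:ℂ); 0,(y:ℂ),(x:ℂ)] * !![1,0,0; 0,1,1; 0,-I,I] := by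
  ext i j
  fin_cases i <;> fin_cases j <;>
    simp [Matrix.mul_apply, Fin.sum_univ_three, Matrix.diagonal, Matrix.vecHead,
      Matrix.vecTail] <;> ring_nf <;> simp [Complex.I_sq]

lemma key2 (x y : ℝ) :
    (!![1,1,0; I,-I,0; 0,0,1] : Matrix (Fin 3) (Fin 3) ℂ)
      * diagonal ![(x:ℂ) - y*I, (x:ℂ) + y*I, 1]
    = !![(x:ℂ),-(y:ℂ),0; (y:ℂ),(x:ℂ),0; 0,0,1] * !![1,1,0; I,-I,0; 0,0,1] := by
  ext i j
  fin_cases i <;> fin_cases j <;>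
    simp [Matrix.mul_apply, Fin.sum_univ_three, Matrix.diagonal, Matrix.vecHead,
      Matrix.vecTail] <;> ring_nf <;> simp [Complex.I_sq]

lemma key3 (x y : ℝ) :
    (!![1,0,1; 0,1,0; I,0,-I] : Matrix (Fin 3) (Fin 3) ℂ)
      * diagonal ![(x:ℂ) - y*I, 1, (x:ℂ) + y*I]
    = !![(x:ℂ),0,-(y:ℂ); 0,1,0; (y:ℂ),0,(x:ℂ)] * !![1,0,1; 0,1,0; I,0,-I] := by
  ext i j
  fin_cases i <;> fin_cases j <;>
    simp [Matrix.mul_apply, Fin.sum_univ_three, Matrix.diagonal, Matrix.vecHead,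
      Matrix.vecTail] <;> ring_nf <;> simp [Complex.I_sq]

lemma det1 : IsUnit (!![1,0,0; 0,1,1; 0,-I,I] : Matrix (Fin 3) (Fin 3) ℂ) := by
  rw [Matrix.isUnit_iff_isUnit_det, isUnit_iff_ne_zero]
  rw [Matrix.det_fin_three]
  simp

lemma det2 : IsUnit (!![1,1,0; I,-I,0; 0,0,1] : Matrix (Fin 3) (Fin 3) ℂ) := by
  rw [Matrix.isUnit_iff_isUnit_det, isUnit_iff_ne_zero]
  rw [Matrix.det_fin_three]
  simp
  norm_num [Complex.ext_iff]

lemma det3 : IsUnit (!![1,0,1; 0,1,0; I,0,-I] : Matrix (Fin 3) (Fin 3) ℂ) := by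
  rw [Matrix.isUnit_iff_isUnit_det, isUnit_iff_ne_zero]
  rw [Matrix.det_fin_three]
  simp
  norm_num [Complex.ext_iff]

lemma smul_diag (c u v p q r : ℂ) (h1 : c * 1 = p) (h2 : c * u = q) (h3 : c * v = r) :
    c • diagonal ![1, u, v] = diagonal ![p, q, r] := by
  ext i j
  rw [Matrix.smul_apply]
  rcases eq_or_ne i j with rfl | hij
  · fin_cases i <;> simp [← h1, ← h2, ← h3]
  · simp [Matrix.diagonal_apply_ne _ hij]

lemma heq_det {Pm Q Am Bm : Matrix (Fin 3) (Fin 3) ℂ} (hPQ : Pm * Q = 1)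
    (h : Pm * Am * Q = Bm) {dA dB : Fin 3 → ℂ} (hA : Am = diagonal dA)
    (hB : Bm = diagonal dB) (x : ℂ) :
    (x - dB 0) * ((x - dB 1) * (x - dB 2)) = (x - dA 0) * ((x - dA 1) * (x - dA 2)) := by
  have h1 : Pm * (x • (1 : Matrix (Fin 3) (Fin 3) ℂ) - Am) * Q
      = x • (1 : Matrix (Fin 3) (Fin 3) ℂ) - Bm := by
    rw [Matrix.mul_sub, Matrix.sub_mul, h]
    congr 1
    rw [Matrix.mul_smul, Matrix.smul_mul, mul_one, hPQ]
  have h2 : (x • (1 : Matrix (Fin 3) (Fin 3) ℂ) - Bm).det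
      = (x • (1 : Matrix (Fin 3) (Fin 3) ℂ) - Am).det := by
    rw [← h1, Matrix.det_mul, Matrix.det_mul]
    have hd : Pm.det * Q.det = 1 := by rw [← Matrix.det_mul, hPQ, Matrix.det_one]
    calc Pm.det * (x • (1 : Matrix (Fin 3) (Fin 3) ℂ) - Am).det * Q.det
        = (Pm.det * Q.det) * (x • (1 : Matrix (Fin 3) (Fin 3) ℂ) - Am).det := by ring
      _ = _ := by rw [hd, one_mul]
  have key : ∀ d : Fin 3 → ℂ, (x • (1 : Matrix (Fin 3) (Fin 3) ℂ) - diagonal d).det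
      = (x - d 0) * ((x - d 1) * (x - d 2)) := by
    intro d
    rw [Matrix.smul_one_eq_diagonal, Matrix.diagonal_sub, Matrix.det_diagonal,
      Fin.prod_univ_three]
    ring
  rw [hA, hB, key, key] at h2
  exact h2

theorem stmt4 (n a b : ℕ) (hn : 3 ≤ n) (hab : a < b) (hb : b ≤ n - 1)
    (hgcd : Nat.gcd a b = 1)
    (A : GL (Fin 3) ℂ)
    (hA : (A : Matrix (Fin 3) (Fin 3) ℂ)
      = Matrix.diagonal ![1, (Complex.exp (2 * Real.pi * Complex.I / (n : ℂ))) ^ a, (Complex.exp (2 * Real.pi * Complex.I / (n : ℂ))) ^ b]) :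
    (∃ φ : PGL3C,
        Subgroup.map (MulAut.conj φ).toMonoidHom (Subgroup.closure {proj A}) ≤ PGL3R)
      ↔ ((n : ℤ) ∣ ((a : ℤ) + b) ∨ (n : ℤ) ∣ ((a : ℤ) - 2 * b) ∨ (n : ℤ) ∣ (2 * (a : ℤ) - b)) := by
  set ζ := Complex.exp (2 * Real.pi * Complex.I / (n : ℂ)) with hζdef
  have hn0 : n ≠ 0 := by omega
  have hprim : IsPrimitiveRoot ζ n := Complex.isPrimitiveRoot_exp n hn0
  have hζ0 : ζ ≠ 0 := Complex.exp_ne_zero _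
  have hconj : (starRingEnd ℂ) ζ = ζ⁻¹ := by
    rw [hζdef, ← Complex.exp_conj, ← Complex.exp_neg]
    congr 1
    simp [map_div₀, Complex.conj_I, Complex.conj_ofNat]
    ring
  have hconjpow : ∀ m : ℕ, (starRingEnd ℂ) (ζ ^ m) = ζ ^ (-(m:ℤ)) := by
    intro m
    rw [map_pow, hconj, inv_pow, ← zpow_natCast ζ m, ← _root_.zpow_neg]
  have hpow : ∀ j k : ℤ, ζ ^ j = ζ ^ k ↔ (n:ℤ) ∣ (j - k) := by
    intro j k
    rw [← hprim.zpow_eq_one_iff_dvd, zpow_sub₀ hζ0,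
      div_eq_one_iff_eq (zpow_ne_zero _ hζ0)]
  constructor
  · rintro ⟨φ, hφ⟩
    have hmem : (MulAut.conj φ).toMonoidHom (proj A) ∈ PGL3R :=
      hφ (Subgroup.mem_map_of_mem _ (Subgroup.subset_closure rfl))
    have hfix := sigmaPGL_fix hmem
    simp only [MulEquiv.coe_toMonoidHom, MulAut.conj_apply] at hfix
    set ψ := (sigmaPGL φ)⁻¹ * φ with hψ
    have h0 : sigmaPGL φ * proj (sigmaGL A) * (sigmaPGL φ)⁻¹ = φ * proj A * φ⁻¹ := by
      rw [← sigmaPGL_proj, ← map_inv]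
      rw [← _root_.map_mul, ← _root_.map_mul]
      exact hfix
    have hkey : proj (sigmaGL A) = ψ * proj A * ψ⁻¹ := by
      calc proj (sigmaGL A)
          = (sigmaPGL φ)⁻¹ * (sigmaPGL φ * proj (sigmaGL A) * (sigmaPGL φ)⁻¹)
            * sigmaPGL φ := by group
        _ = (sigmaPGL φ)⁻¹ * (φ * proj A * φ⁻¹) * sigmaPGL φ := by rw [h0]
        _ = ψ * proj A * ψ⁻¹ := by rw [hψ]; group
    obtain ⟨Pu, hPu⟩ := QuotientGroup.mk'_surjective (Subgroup.center (GL (Fin 3) ℂ)) ψ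
    have hq : proj (sigmaGL A) = proj (Pu * A * Pu⁻¹) := by
      rw [_root_.map_mul, _root_.map_mul, map_inv]
      have : proj Pu = ψ := hPu
      rw [this, ← hkey]
    obtain ⟨c, hc0, hc⟩ := proj_eq_proj hq
    rw [Units.val_mul, Units.val_mul] at hc
    have hPQ : (Pu : Matrix (Fin 3) (Fin 3) ℂ)
        * ((Pu⁻¹ : GL (Fin 3) ℂ) : Matrix (Fin 3) (Fin 3) ℂ) = 1 := by
      rw [← Units.val_mul, mul_inv_cancel, Units.val_one]
    have hA' : (A : Matrix (Fin 3) (Fin 3) ℂ)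
        = diagonal ![1, ζ ^ ((a:ℤ)), ζ ^ ((b:ℤ))] := by
      rw [hA, zpow_natCast, zpow_natCast]
    have hB : c • ((sigmaGL A : GL (Fin 3) ℂ) : Matrix (Fin 3) (Fin 3) ℂ)
        = diagonal ![c * 1, c * ζ ^ (-(a:ℤ)), c * ζ ^ (-(b:ℤ))] := by
      have hσ : ((sigmaGL A : GL (Fin 3) ℂ) : Matrix (Fin 3) (Fin 3) ℂ)
          = diagonal ![1, ζ ^ (-(a:ℤ)), ζ ^ (-(b:ℤ))] := by
        rw [sigmaGL_coe, hA, Matrix.diagonal_map (by simp)]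
        refine congrArg diagonal (funext fun i => ?_)
        fin_cases i
        · simp
        · simp only [Matrix.cons_val_one, Matrix.head_cons]
          exact hconjpow a
        · simp only [Matrix.cons_val_two, Matrix.tail_cons, Matrix.head_cons]
          exact hconjpow b
      rw [hσ]
      exact smul_diag _ _ _ _ _ _ rfl rfl rfl
    have H := fun x => heq_det hPQ hc hA' hB x
    simp only [Matrix.cons_val_zero, Matrix.cons_val_one, Matrix.head_cons,
      Matrix.cons_val_two, Matrix.tail_cons] at H
    have Fc := H c
    rw [mul_one, sub_self, zero_mul] at Fc
    have F0 := H 0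
    have G1 : c ^ 3 * (ζ ^ (-(a:ℤ)) * ζ ^ (-(b:ℤ))) = ζ ^ ((a:ℤ)) * ζ ^ ((b:ℤ)) := by
      linear_combination -F0
    rcases mul_eq_zero.mp Fc.symm with h1 | h12
    · -- c = 1
      have hc1 : c = 1 := sub_eq_zero.mp h1
      rw [hc1, one_pow, one_mul, ← zpow_add₀ hζ0, ← zpow_add₀ hζ0] at G1
      have h2ab : (n:ℤ) ∣ 2 * ((a:ℤ) + b) := by
        have := (hpow _ _).mp G1
        rw [show (-(a:ℤ) + -(b:ℤ)) - ((a:ℤ) + b) = -(2 * ((a:ℤ) + b)) by ring] at this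
        exact dvd_neg.mp this
      have Fu := H (ζ ^ (-(a:ℤ)))
      rw [hc1, mul_one, one_mul, one_mul, sub_self, zero_mul, mul_zero] at Fu
      rcases mul_eq_zero.mp Fu.symm with g1 | g23
      · -- ζ^{-a} = 1
        have hna : (n:ℤ) ∣ (a:ℤ) := by
          have := (hpow (-(a:ℤ)) 0).mp (by rw [zpow_zero]; exact sub_eq_zero.mp g1)
          rw [show (-(a:ℤ)) - 0 = -(a:ℤ) by ring] at this
          exact dvd_neg.mp this
        have ha0 : a = 0 := Nat.eq_zero_of_dvd_of_lt (Int.natCast_dvd_natCast.mp hna) (by omega)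
          |>.symm ▸ rfl
        exfalso
        have hb1 : b = 1 := by
          rw [ha0] at hgcd; simpa using hgcd
        rw [ha0, hb1] at h2ab
        norm_num at h2ab
        have := Int.le_of_dvd (by norm_num) h2ab
        omega
      rcases mul_eq_zero.mp g23 with g2 | g3
      · -- ζ^{-a} = ζ^a
        exfalso
        have hna : (n:ℤ) ∣ 2 * (a:ℤ) := by
          have := (hpow (-(a:ℤ)) ((a:ℤ))).mp (sub_eq_zero.mp g2)
          rw [show (-(a:ℤ)) - (a:ℤ) = -(2 * (a:ℤ)) by ring] at this
          exact dvd_neg.mp this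
        have hnb : (n:ℤ) ∣ 2 * (b:ℤ) := by
          have := dvd_sub h2ab hna
          rwa [show 2 * ((a:ℤ) + b) - 2 * (a:ℤ) = 2 * (b:ℤ) by ring] at this
        have hbez := Nat.gcd_eq_gcd_ab a b
        rw [hgcd] at hbez
        have hn2 : (n:ℤ) ∣ 2 := by
          have : (2:ℤ) = 2 * (a:ℤ) * Nat.gcdA a b + 2 * (b:ℤ) * Nat.gcdB a b := by
            rw [show (2:ℤ) * (a:ℤ) * Nat.gcdA a b + 2 * (b:ℤ) * Nat.gcdB a b
              = 2 * ((a:ℤ) * Nat.gcdA a b + (b:ℤ) * Nat.gcdB a b) by ring, ← hbez]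
            norm_num
          rw [this]
          exact dvd_add (Dvd.dvd.mul_right hna _) (Dvd.dvd.mul_right hnb _)
        have := Int.le_of_dvd (by norm_num) hn2
        omega
      · -- ζ^{-a} = ζ^b
        left
        have := (hpow (-(a:ℤ)) ((b:ℤ))).mp (sub_eq_zero.mp g3)
        rw [show (-(a:ℤ)) - (b:ℤ) = -((a:ℤ) + b) by ring] at this
        exact dvd_neg.mp this
    rcases mul_eq_zero.mp h12 with h2 | h3
    · -- c = ζ^a
      right; left
      have hc2 : c = ζ ^ ((a:ℤ)) := sub_eq_zero.mp h2
      rw [hc2, ← _root_.zpow_natCast (ζ ^ ((a:ℤ))) 3, ← _root_.zpow_mul, ← zpow_add₀ hζ0,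
        ← zpow_add₀ hζ0, ← zpow_add₀ hζ0] at G1
      have := (hpow _ _).mp G1
      push_cast at this
      rwa [show ((a:ℤ) * 3 + (-(a:ℤ) + -(b:ℤ))) - ((a:ℤ) + (b:ℤ)) = (a:ℤ) - 2 * b
        by ring] at this
    · -- c = ζ^b
      right; right
      have hc3 : c = ζ ^ ((b:ℤ)) := sub_eq_zero.mp h3
      rw [hc3, ← _root_.zpow_natCast (ζ ^ ((b:ℤ))) 3, ← _root_.zpow_mul, ← zpow_add₀ hζ0,
        ← zpow_add₀ hζ0, ← zpow_add₀ hζ0] at G1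
      have := (hpow _ _).mp G1
      push_cast at this
      rw [show ((b:ℤ) * 3 + (-(a:ℤ) + -(b:ℤ))) - ((a:ℤ) + (b:ℤ)) = -(2 * (a:ℤ) - b)
        by ring] at this
      exact dvd_neg.mp this
  · rintro (h1 | h2 | h3)
    · -- n ∣ a + b : A itself is conjugate to a real matrix
      set x := (ζ ^ a).re with hx
      set y := (ζ ^ a).im with hy
      have hu : ζ ^ a = (x:ℂ) + y * Complex.I := (Complex.re_add_im _).symm
      have hv : ζ ^ b = (x:ℂ) - y * Complex.I := by
        have hvz : ζ ^ (b:ℤ) = ζ ^ (-(a:ℤ)) := (hpow _ _).mpr (by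
          rw [show (b:ℤ) - -(a:ℤ) = (a:ℤ) + b by ring]; exact h1)
        have : ζ ^ b = (starRingEnd ℂ) (ζ ^ a) := by
          rw [hconjpow a, ← hvz, zpow_natCast]
        rw [this, hu]
        simp [Complex.ext_iff]
      have hAm : (A : Matrix (Fin 3) (Fin 3) ℂ)
          = diagonal ![1, (x:ℂ) + y * Complex.I, (x:ℂ) - y * Complex.I] := by
        rw [hA, hu, hv]
      refine construct A _ det1 A rfl
        (!![1,0,0; 0,(x:ℂ),-(y:ℂ); 0,(y:ℂ),(x:ℂ)]) ?_ ?_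
      · intro i j; fin_cases i <;> fin_cases j <;> simp [Matrix.vecHead, Matrix.vecTail]
      · rw [hAm]; exact key1 x y
    · -- n ∣ a - 2b
      set x := (ζ ^ b).re with hx
      set y := (ζ ^ b).im with hy
      have hu : ζ ^ b = (x:ℂ) + y * Complex.I := (Complex.re_add_im _).symm
      set cu : ℂˣ := Units.mk0 (ζ ^ (-(b:ℤ))) (zpow_ne_zero _ hζ0) with hcu
      have hc1 : ζ ^ (-(b:ℤ)) * 1 = (x:ℂ) - y * Complex.I := by
        rw [mul_one, ← hconjpow b, hu]
        simp [Complex.ext_iff]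
      have hc2 : ζ ^ (-(b:ℤ)) * ζ ^ a = (x:ℂ) + y * Complex.I := by
        rw [← hu, ← zpow_natCast ζ a, ← zpow_natCast ζ b, ← zpow_add₀ hζ0]
        exact (hpow _ _).mpr (by
          rw [show (-(b:ℤ) + (a:ℤ)) - (b:ℤ) = (a:ℤ) - 2 * b by ring]; exact h2)
      have hc3 : ζ ^ (-(b:ℤ)) * ζ ^ b = 1 := by
        rw [← zpow_natCast ζ b, ← zpow_add₀ hζ0, neg_add_cancel, zpow_zero]
      have hDm : ((scalarGL cu * A : GL (Fin 3) ℂ) : Matrix (Fin 3) (Fin 3) ℂ)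
          = diagonal ![(x:ℂ) - y * Complex.I, (x:ℂ) + y * Complex.I, 1] := by
        rw [Units.val_mul]
        show ((ζ ^ (-(b:ℤ)) : ℂ) • (1 : Matrix (Fin 3) (Fin 3) ℂ))
          * (A : Matrix (Fin 3) (Fin 3) ℂ) = _
        rw [Matrix.smul_mul, one_mul, hA]
        exact smul_diag _ _ _ _ _ _ hc1 hc2 hc3
      refine construct A _ det2 (scalarGL cu * A)
        (by rw [_root_.map_mul, proj_scalarGL, one_mul])
        (!![(x:ℂ),-(y:ℂ),0; (y:ℂ),(x:ℂ),0; 0,0,1]) ?_ ?_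
      · intro i j; fin_cases i <;> fin_cases j <;> simp [Matrix.vecHead, Matrix.vecTail]
      · rw [hDm]; exact key2 x y
    · -- n ∣ 2a - b
      set x := (ζ ^ a).re with hx
      set y := (ζ ^ a).im with hy
      have hu : ζ ^ a = (x:ℂ) + y * Complex.I := (Complex.re_add_im _).symm
      set cu : ℂˣ := Units.mk0 (ζ ^ (-(a:ℤ))) (zpow_ne_zero _ hζ0) with hcu
      have hc1 : ζ ^ (-(a:ℤ)) * 1 = (x:ℂ) - y * Complex.I := by
        rw [mul_one, ← hconjpow a, hu]
        simp [Complex.ext_iff]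
      have hc2 : ζ ^ (-(a:ℤ)) * ζ ^ a = 1 := by
        rw [← zpow_natCast ζ a, ← zpow_add₀ hζ0, neg_add_cancel, zpow_zero]
      have hc3 : ζ ^ (-(a:ℤ)) * ζ ^ b = (x:ℂ) + y * Complex.I := by
        rw [← hu, ← zpow_natCast ζ a, ← zpow_natCast ζ b, ← zpow_add₀ hζ0]
        exact (hpow _ _).mpr (by
          rw [show (-(a:ℤ) + (b:ℤ)) - (a:ℤ) = -(2 * (a:ℤ) - b) by ring]
          exact dvd_neg.mpr h3)
      have hDm : ((scalarGL cu * A : GL (Fin 3) ℂ) : Matrix (Fin 3) (Fin 3) ℂ)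
          = diagonal ![(x:ℂ) - y * Complex.I, 1, (x:ℂ) + y * Complex.I] := by
        rw [Units.val_mul]
        show ((ζ ^ (-(a:ℤ)) : ℂ) • (1 : Matrix (Fin 3) (Fin 3) ℂ))
          * (A : Matrix (Fin 3) (Fin 3) ℂ) = _
        rw [Matrix.smul_mul, one_mul, hA]
        exact smul_diag _ _ _ _ _ _ hc1 hc2 hc3
      refine construct A _ det3 (scalarGL cu * A)
        (by rw [_root_.map_mul, proj_scalarGL, one_mul])
        (!![(x:ℂ),0,-(y:ℂ); 0,1,0; (y:ℂ),0,(x:ℂ)]) ?_ ?_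
      · intro i j; fin_cases i <;> fin_cases j <;> simp [Matrix.vecHead, Matrix.vecTail]
      · rw [hDm]; exact key3 x y
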